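/- Let f = ∑_{k≥2} 𝟙_{I_k} where N_1 = 2, N_{k+1} = N_k^{10}, L_k = ⌊N_k/3⌋, and I_k = [N_k+1, N_k+L_k] ∩ ℤ. Then f ∈ ℓ^∞(ℤ), and there exists K such that for all k ≥ K the discrete frequency function satisfies r_{N_k} = L_k; consequently r_{N_k}/N_k → 1/3 and the set { n ∈ ℤ : r_n/|n| ∈ [1/4, 3/4] } is infinite. -/

import Mathlib

open scoped BigOperators
open Filter

noncomputable def discAvg (f : ℤ → ℝ) (r : ℕ) (n : ℤ) : ℝ :=
  (∑ j ∈ Finset.Icc (-(r : ℤ)) (r : ℤ), |f (n + j)|) / (2 * r + 1)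

noncomputable def discMax (f : ℤ → ℝ) (n : ℤ) : ℝ := ⨆ r : ℕ, discAvg f r n

noncomputable def discFreq (f : ℤ → ℝ) (n : ℤ) : ℕ :=
  sInf {r : ℕ | discMax f n = discAvg f r n}

/-- The sparse sequence `N_1 = 2`, `N_{k+1} = N_k ^ 10` (indexed from `0`, so
`Nseq 0 = 2` plays the role of `N_1`, and `Nseq 1 = 2 ^ 10` that of `N_2`). -/
def Nseq : ℕ → ℕ
  | 0 => 2
  | k + 1 => (Nseq k) ^ 10

/-- `L_k = ⌊N_k / 3⌋` (natural number division). -/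
def Lseq (k : ℕ) : ℕ := Nseq k / 3

open scoped Classical

lemma two_le_Nseq (k : ℕ) : 2 ≤ Nseq k := by
  induction k with
  | zero => simp [Nseq]
  | succ k ih => calc 2 ≤ Nseq k := ih
                     _ ≤ Nseq k ^ 10 := Nat.le_self_pow (by norm_num) _

lemma Nseq_pos (k : ℕ) : 0 < Nseq k := lt_of_lt_of_le (by norm_num) (two_le_Nseq k)

lemma mul512_le (k : ℕ) : 512 * Nseq k ≤ Nseq (k+1) := by
  have h2 := two_le_Nseq k
  have : 2^9 * Nseq k ≤ Nseq k ^ 9 * Nseq k :=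
    Nat.mul_le_mul_right _ (Nat.pow_le_pow_left h2 9)
  calc 512 * Nseq k = 2^9 * Nseq k := by norm_num
    _ ≤ Nseq k ^ 9 * Nseq k := this
    _ = Nseq k ^ 10 := by ring
    _ = Nseq (k+1) := rfl

lemma Nseq_lt_succ (k : ℕ) : Nseq k < Nseq (k+1) := by
  have := mul512_le k; have h := Nseq_pos k; omega

lemma Nseq_strictMono : StrictMono Nseq := strictMono_nat_of_lt_succ Nseq_lt_succ

lemma add_two_le_Nseq (k : ℕ) : k + 2 ≤ Nseq k := by
  induction k with
  | zero => simp [Nseq]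
  | succ k ih => have := Nseq_lt_succ k; omega

lemma sum_Nseq_le (J : ℕ) : ∑ j ∈ Finset.range J, Nseq j ≤ Nseq J := by
  induction J with
  | zero => simp
  | succ J ih =>
    rw [Finset.sum_range_succ]
    have h := mul512_le J
    omega

lemma Lseq_le (k : ℕ) : 3 * Lseq k ≤ Nseq k := by unfold Lseq; omega

lemma Nseq_le_Lseq (k : ℕ) : Nseq k ≤ 3 * Lseq k + 2 := by unfold Lseq; omega

def SQ : Set ℤ := {n : ℤ | ∃ k : ℕ, 1 ≤ k ∧
      (Nseq k : ℤ) + 1 ≤ n ∧ n ≤ (Nseq k : ℤ) + (Lseq k : ℤ)}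


noncomputable def cnt (r : ℕ) (n : ℤ) : ℕ :=
  ((Finset.Icc (-(r:ℤ)) (r:ℤ)).filter (fun j => n + j ∈ SQ)).card


lemma sum_eq_cnt (r : ℕ) (n : ℤ) :
    (∑ j ∈ Finset.Icc (-(r:ℤ)) (r:ℤ), |(SQ.indicator (fun _ => (1:ℝ))) (n + j)|)
      = (cnt r n : ℝ) := by
  unfold cnt
  rw [← Finset.sum_boole]
  refine Finset.sum_congr rfl fun j _ => ?_
  by_cases h : n + j ∈ SQ <;> simp [Set.indicator_apply, h]

lemma cnt_le (r : ℕ) (n : ℤ) : cnt r n ≤ 2 * r + 1 := by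
  unfold cnt
  calc _ ≤ (Finset.Icc (-(r:ℤ)) (r:ℤ)).card := Finset.card_filter_le _ _
    _ = 2 * r + 1 := by rw [Int.card_Icc]; omega

/-- clean window: exact count -/
lemma cnt_clean (m r : ℕ) (hr : r + 2 * Nseq m < Nseq (m+1)) :
    cnt r (Nseq (m+1)) = min r (Lseq (m+1)) := by
  classical
  set P := Nseq m with hP
  set N := Nseq (m+1) with hN
  set L := Lseq (m+1) with hL
  have h3L : 3 * L ≤ N := Lseq_le (m+1)
  have hrN : r < N := by omega
  unfold cnt
  have hset : (Finset.Icc (-(r:ℤ)) (r:ℤ)).filter (fun j => (N:ℤ) + j ∈ SQ)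
      = Finset.Icc (1:ℤ) (min r L : ℕ) := by
    ext j
    simp only [Finset.mem_filter, Finset.mem_Icc]
    constructor
    · rintro ⟨⟨hj1, hj2⟩, k', hk'1, hm1, hm2⟩
      have hcase : k' ≤ m ∨ k' = m + 1 ∨ m + 2 ≤ k' := by omega
      rcases hcase with h | h | h
      · exfalso
        have hle : Nseq k' ≤ P := Nseq_strictMono.monotone h
        have hLle : Lseq k' ≤ P := le_trans (by unfold Lseq; omega) hle
        have : (N:ℤ) + j ≤ 2 * P := by
          calc (N:ℤ) + j ≤ (Nseq k' : ℤ) + (Lseq k' : ℤ) := hm2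
            _ ≤ (P:ℤ) + P := by exact_mod_cast add_le_add hle hLle
            _ = 2 * P := by ring
        have : (N:ℤ) - r ≤ 2 * P := by omega
        have : (N:ℤ) ≤ 2 * P + r := by omega
        exact absurd this (by exact_mod_cast fun h => absurd (by exact_mod_cast h : N ≤ 2 * P + r) (by omega))
      · subst h
        constructor
        · omega
        · have hjr : j ≤ (r:ℤ) := hj2
          have hjL : j ≤ (L:ℤ) := by omega
          push_cast
          omega
      · exfalso
        have h2 : Nseq (m+2) ≤ Nseq k' := Nseq_strictMono.monotone h
        have h512 : 512 * N ≤ Nseq (m+2) := mul512_le (m+1)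
        have : (N:ℤ) + j ≥ (Nseq k' : ℤ) + 1 := hm1
        have hNk : (512 * N : ℤ) ≤ (Nseq k' : ℤ) := by exact_mod_cast le_trans h512 h2
        have hN2 : (2:ℤ) ≤ N := by exact_mod_cast two_le_Nseq (m+1)
        omega
    · intro ⟨h1, h2⟩
      have hjr : j ≤ (r:ℤ) := le_trans h2 (by push_cast; omega)
      refine ⟨⟨by omega, hjr⟩, m+1, by omega, by push_cast at h2 ⊢; omega, by push_cast at h2 ⊢; omega⟩
  rw [hset, Int.card_Icc]
  omega

/-- middle regime bound -/
lemma cnt_le_mid (m r : ℕ) (hr : Nseq (m+1) + r ≤ Nseq (m+2)) :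
    cnt r (Nseq (m+1)) ≤ Lseq (m+1) + 2 * Nseq m := by
  classical
  set P := Nseq m with hP
  set N := Nseq (m+1) with hN
  set L := Lseq (m+1) with hL
  unfold cnt
  have hsub : (Finset.Icc (-(r:ℤ)) (r:ℤ)).filter (fun j => (N:ℤ) + j ∈ SQ)
      ⊆ Finset.Icc ((3:ℤ) - N) ((2*P:ℤ) - N) ∪ Finset.Icc (1:ℤ) (L:ℤ) := by
    intro j hj
    simp only [Finset.mem_filter, Finset.mem_Icc] at hj
    obtain ⟨⟨hj1, hj2⟩, k', hk'1, hm1, hm2⟩ := hj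
    have hcase : k' ≤ m ∨ k' = m + 1 ∨ m + 2 ≤ k' := by omega
    simp only [Finset.mem_union, Finset.mem_Icc]
    rcases hcase with h | h | h
    · left
      have hle : Nseq k' ≤ P := Nseq_strictMono.monotone h
      have hLle : Lseq k' ≤ P := le_trans (by unfold Lseq; omega) hle
      have h2 : (2:ℤ) ≤ (Nseq k' : ℤ) := by exact_mod_cast two_le_Nseq k'
      have hup : ((Nseq k' : ℤ)) + (Lseq k' : ℤ) ≤ 2 * P := by
        have : Nseq k' + Lseq k' ≤ 2 * P := by omega
        exact_mod_cast this
      omega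
    · right; subst h; push_cast at hm1 hm2 ⊢; omega
    · exfalso
      have h2 : Nseq (m+2) ≤ Nseq k' := Nseq_strictMono.monotone h
      have hNk : (N:ℤ) + r ≤ (Nseq k' : ℤ) := by exact_mod_cast le_trans hr h2
      omega
  calc _ ≤ (Finset.Icc ((3:ℤ) - N) ((2*P:ℤ) - N) ∪ Finset.Icc (1:ℤ) (L:ℤ)).card :=
        Finset.card_le_card hsub
    _ ≤ (Finset.Icc ((3:ℤ) - N) ((2*P:ℤ) - N)).card + (Finset.Icc (1:ℤ) (L:ℤ)).card :=
        Finset.card_union_le _ _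
    _ ≤ L + 2 * P := by
        rw [Int.card_Icc, Int.card_Icc]
        have hP2 : 2 ≤ P := two_le_Nseq m
        omega

/-- far regime bound -/
lemma cnt_le_far (r : ℕ) (n : ℤ) :
    3 * cnt r n ≤ 2 * (n + r).toNat := by
  classical
  set M : ℕ := (n + r).toNat with hM
  unfold cnt
  set F : Finset ℕ := (Finset.range M).filter (fun k' => Nseq k' < M) with hF
  have hsub : (Finset.Icc (-(r:ℤ)) (r:ℤ)).filter (fun j => n + j ∈ SQ)
      ⊆ F.biUnion (fun k' => Finset.Ioc ((Nseq k' : ℤ) - n) ((Nseq k' : ℤ) - n + Lseq k')) := by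
    intro j hj
    simp only [Finset.mem_filter, Finset.mem_Icc] at hj
    obtain ⟨⟨hj1, hj2⟩, k', hk'1, hm1, hm2⟩ := hj
    have hlt : (Nseq k' : ℤ) < n + r := by omega
    have hltM : Nseq k' < M := by
      rw [hM]
      exact Int.lt_toNat.mpr hlt
    have hkM : k' < M := by
      have := add_two_le_Nseq k'
      omega
    simp only [Finset.mem_biUnion]
    exact ⟨k', by simp [hF, hkM, hltM], by simp only [Finset.mem_Ioc]; omega⟩
  have hcard : ((Finset.Icc (-(r:ℤ)) (r:ℤ)).filter (fun j => n + j ∈ SQ)).card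
      ≤ ∑ k' ∈ F, Lseq k' := by
    calc _ ≤ (F.biUnion (fun k' => Finset.Ioc ((Nseq k' : ℤ) - n) ((Nseq k' : ℤ) - n + Lseq k'))).card :=
          Finset.card_le_card hsub
      _ ≤ ∑ k' ∈ F, (Finset.Ioc ((Nseq k' : ℤ) - n) ((Nseq k' : ℤ) - n + Lseq k')).card :=
          Finset.card_biUnion_le
      _ = ∑ k' ∈ F, Lseq k' := by
          refine Finset.sum_congr rfl fun k' _ => ?_
          rw [Int.card_Ioc]; omega
  have hsumN : ∑ k' ∈ F, Nseq k' ≤ 2 * M := by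
    rcases F.eq_empty_or_nonempty with h | h
    · simp [h]
    · set Jm := F.max' h with hJm
      have hJmF : Jm ∈ F := F.max'_mem h
      have hJmM : Nseq Jm < M := by
        simp only [hF, Finset.mem_filter] at hJmF; exact hJmF.2
      have hsub2 : F ⊆ Finset.range (Jm + 1) := by
        intro x hx
        simp only [Finset.mem_range]
        exact Nat.lt_succ_of_le (F.le_max' x hx)
      calc ∑ k' ∈ F, Nseq k' ≤ ∑ k' ∈ Finset.range (Jm + 1), Nseq k' :=
            Finset.sum_le_sum_of_subset hsub2
        _ = (∑ k' ∈ Finset.range Jm, Nseq k') + Nseq Jm := Finset.sum_range_succ _ _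
        _ ≤ Nseq Jm + Nseq Jm := by have := sum_Nseq_le Jm; omega
        _ ≤ 2 * M := by omega
  have h3L : ∑ k' ∈ F, 3 * Lseq k' ≤ ∑ k' ∈ F, Nseq k' :=
    Finset.sum_le_sum fun k' _ => Lseq_le k'
  rw [← Finset.mul_sum] at h3L
  omega

lemma key_nat (m r : ℕ) :
    cnt r (Nseq (m+1)) * (2 * Lseq (m+1) + 1) ≤ Lseq (m+1) * (2 * r + 1) := by
  set P := Nseq m with hP
  set N := Nseq (m+1) with hN
  set L := Lseq (m+1) with hL
  have hP2 : 2 ≤ P := two_le_Nseq m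
  have h512 : 512 * P ≤ N := mul512_le m
  have h3L : 3 * L ≤ N := Lseq_le (m+1)
  have h3L2 : N ≤ 3 * L + 2 := Nseq_le_Lseq (m+1)
  have hLP : 170 * P ≤ L := by omega
  by_cases hc1 : r + 2 * P < N
  · -- clean window
    have := cnt_clean m r hc1
    rw [this]
    rcases Nat.le_total r L with h | h
    · rw [min_eq_left h]; nlinarith
    · rw [min_eq_right h]; nlinarith
  · push_neg at hc1
    by_cases hc2 : N + r ≤ Nseq (m+2)
    · have hcnt := cnt_le_mid m r hc2
      have hgoal : (L + 2*P) * (2*L+1) ≤ L * (2*r+1) := by nlinarith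
      calc cnt r N * (2*L+1) ≤ (L + 2*P) * (2*L+1) := Nat.mul_le_mul_right _ hcnt
        _ ≤ L * (2*r+1) := hgoal
    · push_neg at hc2
      have hfar := cnt_le_far r (N : ℤ)
      have htn : ((N:ℤ) + r).toNat = N + r := by omega
      rw [htn] at hfar
      -- r ≥ N^2 + 1
      have hrN2 : N * N + 1 ≤ r := by
        have h1 : Nseq (m+2) = N ^ 10 := rfl
        have hN2 : 2 ≤ N := two_le_Nseq (m+1)
        have h2 : N * N + N ≤ N ^ 10 := by
          have : N * N * 2 ≤ N * N * N ^ 8 :=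
            Nat.mul_le_mul_left _ (le_trans hN2 (Nat.le_self_pow (by norm_num) N))
          nlinarith [pow_pos (by omega : 0 < N) 8, sq_nonneg N]
        omega
      have hL2 : 2 ≤ L := by omega
      have hN1024 : 1024 ≤ N := by omega
      -- goal * 3 : 3*cnt*(2L+1) ≤ 2(N+r)(2L+1) ≤ 3L(2r+1)
      have hmain : 2 * (N + r) * (2*L+1) ≤ 3 * (L * (2*r+1)) := by nlinarith
      have h1 : 3 * (cnt r N * (2*L+1)) ≤ 2 * (N + r) * (2*L+1) := by
        calc 3 * (cnt r N * (2*L+1)) = (3 * cnt r N) * (2*L+1) := by ring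
          _ ≤ (2 * (N + r)) * (2*L+1) := Nat.mul_le_mul_right _ hfar
          _ = 2 * (N + r) * (2*L+1) := by ring
      omega

lemma cnt_at_L (m : ℕ) : cnt (Lseq (m+1)) (Nseq (m+1)) = Lseq (m+1) := by
  have hP2 : 2 ≤ Nseq m := two_le_Nseq m
  have h512 : 512 * Nseq m ≤ Nseq (m+1) := mul512_le m
  have h3L : 3 * Lseq (m+1) ≤ Nseq (m+1) := Lseq_le (m+1)
  have h := cnt_clean m (Lseq (m+1)) (by omega)
  simpa using h

lemma key_nat_lt (m r : ℕ) (hr : r < Lseq (m+1)) :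
    cnt r (Nseq (m+1)) * (2 * Lseq (m+1) + 1) < Lseq (m+1) * (2 * r + 1) := by
  have hP2 : 2 ≤ Nseq m := two_le_Nseq m
  have h512 : 512 * Nseq m ≤ Nseq (m+1) := mul512_le m
  have h3L : 3 * Lseq (m+1) ≤ Nseq (m+1) := Lseq_le (m+1)
  have h := cnt_clean m r (by omega)
  rw [h, min_eq_left (le_of_lt hr)]
  nlinarith

section plumbing
variable {f : ℤ → ℝ} (hf : f = SQ.indicator fun _ => (1:ℝ))
include hf

lemma discAvg_eq (r : ℕ) (n : ℤ) :
    discAvg f r n = (cnt r n : ℝ) / (2 * r + 1) := by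
  rw [discAvg, hf, sum_eq_cnt]

omit hf in
lemma denom_pos (r : ℕ) : (0:ℝ) < 2 * (r:ℝ) + 1 := by positivity

lemma discAvg_le_one (r : ℕ) (n : ℤ) : discAvg f r n ≤ 1 := by
  rw [discAvg_eq hf, div_le_one (denom_pos r)]
  have h := cnt_le r n
  have : (cnt r n : ℝ) ≤ ((2 * r + 1 : ℕ) : ℝ) := Nat.cast_le.mpr h
  push_cast at this
  linarith

lemma bdd (n : ℤ) : BddAbove (Set.range fun r => discAvg f r n) :=
  ⟨1, by rintro x ⟨r, rfl⟩; exact discAvg_le_one hf r n⟩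

lemma discMax_eq (m : ℕ) :
    discMax f (Nseq (m+1)) = discAvg f (Lseq (m+1)) (Nseq (m+1)) := by
  refine le_antisymm (ciSup_le fun r => ?_) (le_ciSup (bdd hf _) (Lseq (m+1)))
  rw [discAvg_eq hf, discAvg_eq hf, div_le_div_iff₀ (denom_pos r) (denom_pos _)]
  have h := key_nat m r
  rw [cnt_at_L m]
  calc (cnt r (Nseq (m+1)) : ℝ) * (2 * (Lseq (m+1)) + 1)
      = ((cnt r (Nseq (m+1)) * (2 * Lseq (m+1) + 1) : ℕ) : ℝ) := by push_cast; ring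
    _ ≤ ((Lseq (m+1) * (2 * r + 1) : ℕ) : ℝ) := by exact_mod_cast h
    _ = (Lseq (m+1) : ℝ) * (2 * r + 1) := by push_cast; ring

lemma discAvg_lt (m r : ℕ) (hr : r < Lseq (m+1)) :
    discAvg f r (Nseq (m+1)) < discAvg f (Lseq (m+1)) (Nseq (m+1)) := by
  rw [discAvg_eq hf, discAvg_eq hf, div_lt_div_iff₀ (denom_pos r) (denom_pos _)]
  have h := key_nat_lt m r hr
  rw [cnt_at_L m]
  calc (cnt r (Nseq (m+1)) : ℝ) * (2 * (Lseq (m+1)) + 1)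
      = ((cnt r (Nseq (m+1)) * (2 * Lseq (m+1) + 1) : ℕ) : ℝ) := by push_cast; ring
    _ < ((Lseq (m+1) * (2 * r + 1) : ℕ) : ℝ) := by exact_mod_cast h
    _ = (Lseq (m+1) : ℝ) * (2 * r + 1) := by push_cast; ring

lemma discFreq_eq (m : ℕ) : discFreq f (Nseq (m+1)) = Lseq (m+1) := by
  have hmax := discMax_eq hf m
  apply le_antisymm
  · exact Nat.sInf_le hmax
  · refine le_csInf ⟨Lseq (m+1), hmax⟩ fun r hr => ?_
    by_contra hlt
    push_neg at hlt
    have := discAvg_lt hf m r hlt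
    rw [← hmax] at this
    exact absurd hr (ne_of_gt this)

end plumbing

theorem stmt18
    (f : ℤ → ℝ)
    (hf : f = Set.indicator {n : ℤ | ∃ k : ℕ, 1 ≤ k ∧
      (Nseq k : ℤ) + 1 ≤ n ∧ n ≤ (Nseq k : ℤ) + (Lseq k : ℤ)} fun _ => (1 : ℝ)) :
    (∃ Cb : ℝ, ∀ n, |f n| ≤ Cb) ∧
    (∃ K : ℕ, ∀ k, K ≤ k → discFreq f (Nseq k) = Lseq k) ∧
    Tendsto (fun k : ℕ => (Lseq k : ℝ) / (Nseq k : ℝ)) atTop (nhds (1 / 3)) ∧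
    {n : ℤ | (1 : ℝ) / 4 ≤ (discFreq f n : ℝ) / |(n : ℝ)| ∧
      (discFreq f n : ℝ) / |(n : ℝ)| ≤ 3 / 4}.Infinite := by
  have hf' : f = SQ.indicator fun _ => (1:ℝ) := hf
  have hNpos : ∀ k, (0:ℝ) < (Nseq k : ℝ) := fun k => by
    exact_mod_cast Nseq_pos k
  refine ⟨⟨1, fun n => ?_⟩, ⟨1, fun k hk => ?_⟩, ?_, ?_⟩
  · -- boundedness
    rw [hf']
    by_cases h : n ∈ SQ <;> simp [Set.indicator_apply, h]
  · -- discFreq at Nseq k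
    obtain ⟨m, rfl⟩ : ∃ m, k = m + 1 := ⟨k - 1, by omega⟩
    exact discFreq_eq hf' m
  · -- tendsto
    have hN : Tendsto (fun k : ℕ => (Nseq k : ℝ)) atTop atTop := by
      apply tendsto_natCast_atTop_atTop.comp
      exact tendsto_atTop_mono (fun k => by simp only [id_eq]; have := add_two_le_Nseq k; omega) tendsto_id
    have hdiv : Tendsto (fun k : ℕ => (2:ℝ) / (Nseq k : ℝ)) atTop (nhds 0) :=
      Tendsto.div_atTop tendsto_const_nhds hN
    have hlow : Tendsto (fun k : ℕ => (1:ℝ)/3 - 2 / (Nseq k : ℝ)) atTop (nhds (1/3)) := by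
      have h := hdiv.const_sub ((1:ℝ)/3)
      simpa using h
    refine tendsto_of_tendsto_of_tendsto_of_le_of_le hlow tendsto_const_nhds
      (fun k => ?_) (fun k => ?_)
    · have hN0 := hNpos k
      rw [sub_le_iff_le_add, ← add_div, le_div_iff₀ hN0]
      have h1' : (Nseq k : ℝ) ≤ 3 * Lseq k + 2 := by exact_mod_cast Nseq_le_Lseq k
      linarith
    · have hN0 := hNpos k
      rw [div_le_iff₀ hN0]
      have h1 : 3 * Lseq k ≤ Nseq k := Lseq_le k
      have h1' : (3:ℝ) * Lseq k ≤ Nseq k := by exact_mod_cast h1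
      linarith
  · -- infinite
    refine Set.infinite_of_injective_forall_mem
      (f := fun i : ℕ => ((Nseq (i+1) : ℤ))) ?_ ?_
    · intro a b hab
      simp only [Int.ofNat_inj] at hab
      exact Nat.succ_injective (Nseq_strictMono.injective hab)
    · intro m
      have hfr : discFreq f (Nseq (m+1)) = Lseq (m+1) := discFreq_eq hf' m
      simp only [Set.mem_setOf_eq]
      rw [hfr]
      have habs : |((Nseq (m+1) : ℤ) : ℝ)| = (Nseq (m+1) : ℝ) := by
        rw [abs_of_nonneg (by positivity)]; norm_cast
      rw [habs]
      have hN0 := hNpos (m+1)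
      have h3L : 3 * Lseq (m+1) ≤ Nseq (m+1) := Lseq_le (m+1)
      have h3L2 : Nseq (m+1) ≤ 3 * Lseq (m+1) + 2 := Nseq_le_Lseq (m+1)
      have hbig : 1024 ≤ Nseq (m+1) := by
        have := mul512_le m; have := two_le_Nseq m; nlinarith
      have hc1 : (3:ℝ) * Lseq (m+1) ≤ Nseq (m+1) := by exact_mod_cast h3L
      have hc2 : (Nseq (m+1) : ℝ) ≤ 3 * Lseq (m+1) + 2 := by exact_mod_cast h3L2
      have hc3 : (1024:ℝ) ≤ Nseq (m+1) := by exact_mod_cast hbig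
      constructor
      · rw [le_div_iff₀ hN0]; nlinarith
      · rw [div_le_iff₀ hN0]; nlinarith
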